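/- Let S be a commutative semiring and 𝔞 an ideal of S. Then the z-radical of 𝔞, defined as the intersection of all prime z-ideals of S containing 𝔞, is itself a z-ideal of S and contains 𝔞. -/
import Mathlib


/-- An ideal `I` of a commutative semiring is a *z-ideal* if for every `x ∈ I`,
the intersection of all maximal ideals containing `x` is contained in `I`. -/
def IsZIdeal {S : Type*} [CommSemiring S] (I : Ideal S) : Prop :=
  ∀ x ∈ I, sInf {m : Ideal S | m.IsMaximal ∧ x ∈ m} ≤ I

/-- The *z-radical* of an ideal: the intersection of all prime z-ideals containing it. -/
def zRadical {S : Type*} [CommSemiring S] (a : Ideal S) : Ideal S :=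
  sInf {p : Ideal S | p.IsPrime ∧ IsZIdeal p ∧ a ≤ p}

theorem zRadical_isZIdeal_and_le {S : Type*} [CommSemiring S] (a : Ideal S) :
    IsZIdeal (zRadical a) ∧ a ≤ zRadical a := by
  constructor
  · intro x hx
    apply le_sInf
    rintro p ⟨hp, hz, hap⟩
    exact hz x (Ideal.mem_sInf.mp hx ⟨hp, hz, hap⟩)
  · exact le_sInf fun p hp => hp.2.2
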